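/- Fix n ≥ 1, ε > 0, real parameters β_1 and γ_1, and H : {0,1}^n → ℝ, and define QAOA amplitudes of depth 1 by α_{0,z} = 2^{−n/2} and α_{1,j} = Σ_{z∈{0,1}^n} (Π_{h=1}^{n} a_{β_1}(j_h, z_h)) · α_{0,z} · e^{−i γ_1 H(z)}, where a_β(0,0) = a_β(1,1) = cos β and a_β(0,1) = a_β(1,0) = −i·sin β. If δ = max_{ℓ∈ℝ} |{z : H(z) = ℓ}| / 2^n satisfies δ ≥ 1 − 2^{−n(1/2+ε)}, then for every j ∈ {0,1}^n, |α_{1,j}| ≤ 2^{1−εn} + 2^{−n/2}; in particular all depth-1 QAOA amplitudes are exponentially small in n. -/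

import Mathlib

open scoped Classical

/-- The entries of `exp(−iβσ_X)`: `a(0,0) = a(1,1) = cos β`, `a(0,1) = a(1,0) = −i·sin β`. -/
noncomputable def aEnt (β : ℝ) : Fin 2 → Fin 2 → ℂ :=
  fun i k => if i = k then ((Real.cos β : ℝ) : ℂ) else -Complex.I * ((Real.sin β : ℝ) : ℂ)

/-- QAOA amplitudes on `n` qubits for the diagonal Hamiltonian `Ham`:
`α_{0,z} = 2^{−n/2}` and
`α_{t+1,j} = Σ_z (Π_h a_{β_{t+1}}(j_h, z_h)) α_{t,z} e^{−iγ_{t+1} Ham(z)}`. -/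
noncomputable def qaoaAmp (n : ℕ) (β γ : ℕ → ℝ) (Ham : (Fin n → Fin 2) → ℝ) :
    ℕ → (Fin n → Fin 2) → ℂ
  | 0, _ => ((1 / Real.sqrt (2 ^ n) : ℝ) : ℂ)
  | t + 1, j =>
      ∑ z : Fin n → Fin 2,
        (∏ h : Fin n, aEnt (β (t + 1)) (j h) (z h)) * qaoaAmp n β γ Ham t z *
          Complex.exp (-(Complex.I * (γ (t + 1) : ℂ) * (Ham z : ℂ)))

/-- `δ = max_ℓ |{z : Ham(z) = ℓ}| / 2^n`, the maximum fraction of bit strings sharing the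
same objective value. -/
noncomputable def deltaFrac (n : ℕ) (Ham : (Fin n → Fin 2) → ℝ) : ℝ :=
  (⨆ ℓ : ℝ, ((Finset.univ.filter (fun z : Fin n → Fin 2 => Ham z = ℓ)).card : ℝ)) / 2 ^ n


lemma abs_aEnt_le (β : ℝ) (i k : Fin 2) : ‖aEnt β i k‖ ≤ 1 := by
  unfold aEnt
  split
  · rw [Complex.norm_real, Real.norm_eq_abs]; exact Real.abs_cos_le_one β
  · rw [norm_mul, Complex.norm_real, Real.norm_eq_abs, norm_neg, Complex.norm_I, one_mul]
    exact Real.abs_sin_le_one β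

lemma sum_aEnt (β : ℝ) (i : Fin 2) :
    ∑ k, aEnt β i k = ((Real.cos β : ℝ) : ℂ) - Complex.I * ((Real.sin β : ℝ) : ℂ) := by
  fin_cases i <;> simp [Fin.sum_univ_two, aEnt] <;> ring

lemma abs_cos_sub_I_sin (β : ℝ) :
    ‖((Real.cos β : ℝ) : ℂ) - Complex.I * ((Real.sin β : ℝ) : ℂ)‖ = 1 := by
  have h : (((Real.cos β : ℝ) : ℂ) - Complex.I * ((Real.sin β : ℝ) : ℂ)) =
      Complex.exp ((-β : ℂ) * Complex.I) := by
    rw [Complex.exp_mul_I]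
    rw [Complex.cos_neg, Complex.sin_neg, ← Complex.ofReal_cos, ← Complex.ofReal_sin]
    ring
  rw [h, Complex.norm_exp]
  simp

/-- If `δ = max_ℓ |{z : Ham(z) = ℓ}| / 2^n ≥ 1 − 2^{−n(1/2+ε)}`, then every depth-1 QAOA
amplitude satisfies `|α_{1,j}| ≤ 2^{1−εn} + 2^{−n/2}`; in particular all depth-1 QAOA
amplitudes are exponentially small in `n`. -/
theorem qaoaAmp_depth_one_flat (n : ℕ) (hn : 1 ≤ n) (ε : ℝ) (hε : 0 < ε)
    (β₁ γ₁ : ℝ) (Ham : (Fin n → Fin 2) → ℝ)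
    (hδ : 1 - (2 : ℝ) ^ (-(n : ℝ) * (1 / 2 + ε)) ≤ deltaFrac n Ham)
    (j : Fin n → Fin 2) :
    ‖qaoaAmp n (fun _ => β₁) (fun _ => γ₁) Ham 1 j‖ ≤
      (2 : ℝ) ^ (1 - ε * n) + (2 : ℝ) ^ (-(n : ℝ) / 2) := by
  classical
  have h2n : (0:ℝ) < 2 ^ n := by positivity
  have hcard : Fintype.card (Fin n → Fin 2) = 2 ^ n := by simp
  set η : ℝ := (2 : ℝ) ^ (-(n : ℝ) * (1 / 2 + ε)) with hη
  set f : ℝ → ℝ :=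
    fun ℓ => ((Finset.univ.filter (fun z : Fin n → Fin 2 => Ham z = ℓ)).card : ℝ) with hf
  -- the supremum is attained
  have hfin : (Set.range f).Finite := by
    apply Set.Finite.subset ((Set.finite_Iic ((2:ℕ)^n)).image (Nat.cast : ℕ → ℝ))
    rintro x ⟨ℓ, rfl⟩
    refine ⟨(Finset.univ.filter (fun z : Fin n → Fin 2 => Ham z = ℓ)).card, ?_, rfl⟩
    simpa using (Finset.card_filter_le Finset.univ _).trans_eq (by simp [hcard])
  obtain ⟨ℓs, hℓs⟩ : ∃ ℓ, f ℓ = ⨆ ℓ, f ℓ := (Set.range_nonempty f).csSup_mem hfin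
  set S := Finset.univ.filter (fun z : Fin n → Fin 2 => Ham z = ℓs) with hSdef
  have hSsup : (1 - η) * 2 ^ n ≤ (S.card : ℝ) := by
    unfold deltaFrac at hδ
    have h1 : 1 - η ≤ (f ℓs) / 2 ^ n := by rw [hℓs]; exact hδ
    calc (1 - η) * 2 ^ n ≤ (f ℓs) / 2 ^ n * 2 ^ n := by
          exact mul_le_mul_of_nonneg_right h1 h2n.le
      _ = (S.card : ℝ) := by field_simp [hf]; rfl
  have hSle : S.card ≤ Fintype.card (Fin n → Fin 2) := Finset.card_le_univ S
  have hcompl : ((Sᶜ).card : ℝ) ≤ η * 2 ^ n := by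
    have h1 : ((Sᶜ).card : ℝ) = 2 ^ n - S.card := by
      rw [Finset.card_compl, Nat.cast_sub hSle, hcard]
      push_cast; ring
    linarith [hSsup]
  -- abbreviations
  set c : ℝ := 1 / Real.sqrt (2 ^ n) with hc
  have hc0 : 0 ≤ c := by positivity
  set P : (Fin n → Fin 2) → ℂ := fun z => ∏ h : Fin n, aEnt β₁ (j h) (z h) with hP
  set E : (Fin n → Fin 2) → ℂ :=
    fun z => Complex.exp (-(Complex.I * (γ₁ : ℂ) * (Ham z : ℂ))) with hE
  have hPle : ∀ z, ‖P z‖ ≤ 1 := by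
    intro z
    rw [hP, norm_prod]
    calc ∏ h : Fin n, ‖aEnt β₁ (j h) (z h)‖ ≤ ∏ _h : Fin n, (1:ℝ) :=
          Finset.prod_le_prod (fun h _ => norm_nonneg _)
            (fun h _ => abs_aEnt_le β₁ (j h) (z h))
      _ = 1 := by simp
  have hEabs : ∀ z, ‖E z‖ = 1 := by
    intro z
    rw [hE, Complex.norm_exp]
    norm_num [Complex.mul_re, Complex.mul_im]
  have hPsum : ‖∑ z : Fin n → Fin 2, P z‖ = 1 := by
    have h1 : ∑ z : Fin n → Fin 2, P z =
        (((Real.cos β₁ : ℝ) : ℂ) - Complex.I * ((Real.sin β₁ : ℝ) : ℂ)) ^ n := by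
      have h2 := Finset.prod_univ_sum (fun _ : Fin n => (Finset.univ : Finset (Fin 2)))
        (fun h k => aEnt β₁ (j h) k)
      rw [Fintype.piFinset_univ] at h2
      rw [hP, ← h2, Finset.prod_congr rfl (fun h _ => sum_aEnt β₁ (j h)),
        Finset.prod_const, Finset.card_univ, Fintype.card_fin]
    rw [h1, norm_pow, abs_cos_sub_I_sin, one_pow]
  have habsSc : ∀ z, ‖P z * (c:ℂ) * E z‖ ≤ c := by
    intro z
    rw [norm_mul, norm_mul, hEabs, Complex.norm_real, Real.norm_of_nonneg hc0, mul_one]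
    calc ‖P z‖ * c ≤ 1 * c := mul_le_mul_of_nonneg_right (hPle z) hc0
      _ = c := one_mul c
  -- the amplitude equals the split sum
  have hamp : qaoaAmp n (fun _ => β₁) (fun _ => γ₁) Ham 1 j =
      (∑ z ∈ S, P z * (c:ℂ) * E z) + (∑ z ∈ Sᶜ, P z * (c:ℂ) * E z) := by
    rw [Finset.sum_add_sum_compl]
    simp only [qaoaAmp, hP, hE, hc]
  -- bound the complement part
  have hScpart : ‖∑ z ∈ Sᶜ, P z * (c:ℂ) * E z‖ ≤ c * (η * 2 ^ n) := by
    calc ‖∑ z ∈ Sᶜ, P z * (c:ℂ) * E z‖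
        ≤ ∑ z ∈ Sᶜ, ‖P z * (c:ℂ) * E z‖ := norm_sum_le _ _
      _ ≤ ∑ _z ∈ Sᶜ, c := Finset.sum_le_sum (fun z _ => habsSc z)
      _ = (Sᶜ).card * c := by rw [Finset.sum_const, nsmul_eq_mul]
      _ ≤ (η * 2 ^ n) * c := mul_le_mul_of_nonneg_right hcompl hc0
      _ = c * (η * 2 ^ n) := mul_comm _ _
  -- bound the S part
  have hPScsum : ‖∑ z ∈ Sᶜ, P z‖ ≤ η * 2 ^ n := by
    calc ‖∑ z ∈ Sᶜ, P z‖ ≤ ∑ z ∈ Sᶜ, ‖P z‖ :=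
          norm_sum_le _ _
      _ ≤ ∑ _z ∈ Sᶜ, (1:ℝ) := Finset.sum_le_sum (fun z _ => hPle z)
      _ = (Sᶜ).card := by simp
      _ ≤ η * 2 ^ n := hcompl
  have hSpart : ‖∑ z ∈ S, P z * (c:ℂ) * E z‖ ≤ c * (1 + η * 2 ^ n) := by
    have hEℓ : ∀ z ∈ S, P z * (c:ℂ) * E z =
        P z * ((c:ℂ) * Complex.exp (-(Complex.I * (γ₁:ℂ) * (ℓs:ℂ)))) := by
      intro z hz
      have hz' : Ham z = ℓs := (Finset.mem_filter.mp hz).2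
      rw [hE]
      simp only [hz']
      ring
    rw [Finset.sum_congr rfl hEℓ, ← Finset.sum_mul, norm_mul, norm_mul, Complex.norm_real,
      Real.norm_of_nonneg hc0, Complex.norm_exp]
    have habsE0 : Real.exp ((-(Complex.I * (γ₁:ℂ) * (ℓs:ℂ))).re) = 1 := by
      norm_num [Complex.mul_re, Complex.mul_im]
    rw [habsE0, mul_one]
    have hbound : ‖∑ z ∈ S, P z‖ ≤ 1 + η * 2 ^ n := by
      have hsplit : ∑ z ∈ S, P z = (∑ z : Fin n → Fin 2, P z) - ∑ z ∈ Sᶜ, P z := by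
        rw [← Finset.sum_add_sum_compl S P]; ring
      rw [hsplit]
      calc ‖(∑ z : Fin n → Fin 2, P z) - ∑ z ∈ Sᶜ, P z‖
          = ‖(∑ z : Fin n → Fin 2, P z) + -(∑ z ∈ Sᶜ, P z)‖ := by ring_nf
        _ ≤ ‖∑ z : Fin n → Fin 2, P z‖ + ‖-(∑ z ∈ Sᶜ, P z)‖ :=
            norm_add_le _ _
        _ = ‖∑ z : Fin n → Fin 2, P z‖ + ‖∑ z ∈ Sᶜ, P z‖ := by
            rw [norm_neg]
        _ ≤ 1 + η * 2 ^ n := by rw [hPsum]; exact add_le_add_right hPScsum 1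
    calc ‖∑ z ∈ S, P z‖ * c ≤ (1 + η * 2 ^ n) * c :=
          mul_le_mul_of_nonneg_right hbound hc0
      _ = c * (1 + η * 2 ^ n) := mul_comm _ _
  -- numeric values
  have hcval : c = (2:ℝ) ^ (-(n:ℝ)/2) := by
    rw [hc, Real.sqrt_eq_rpow, ← Real.rpow_natCast 2 n,
      ← Real.rpow_mul (by norm_num : (0:ℝ) ≤ 2), one_div,
      ← Real.rpow_neg (by norm_num : (0:ℝ) ≤ 2)]
    congr 1; ring
  have h2num : 2 * c * (η * 2 ^ n) = (2:ℝ) ^ (1 - ε * (n:ℝ)) := by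
    have key : ∀ a b : ℝ, (2:ℝ)^a * (2:ℝ)^b = (2:ℝ)^(a+b) :=
      fun a b => (Real.rpow_add (by norm_num : (0:ℝ) < 2) a b).symm
    rw [hcval, hη, ← Real.rpow_natCast 2 n]
    calc 2 * (2:ℝ)^(-(n:ℝ)/2) * ((2:ℝ)^(-(n:ℝ)*(1/2+ε)) * (2:ℝ)^((n:ℝ)))
        = (2:ℝ)^(1:ℝ) * (2:ℝ)^(-(n:ℝ)/2) * ((2:ℝ)^(-(n:ℝ)*(1/2+ε)) * (2:ℝ)^((n:ℝ))) := by
          rw [Real.rpow_one]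
      _ = (2:ℝ)^((1:ℝ) + -(n:ℝ)/2 + (-(n:ℝ)*(1/2+ε) + (n:ℝ))) := by rw [key, key, key]
      _ = (2:ℝ)^(1 - ε * (n:ℝ)) := by congr 1; ring
  rw [hamp]
  calc ‖(∑ z ∈ S, P z * (c:ℂ) * E z) + (∑ z ∈ Sᶜ, P z * (c:ℂ) * E z)‖
      ≤ ‖∑ z ∈ S, P z * (c:ℂ) * E z‖ +
        ‖∑ z ∈ Sᶜ, P z * (c:ℂ) * E z‖ := norm_add_le _ _
    _ ≤ c * (1 + η * 2 ^ n) + c * (η * 2 ^ n) := add_le_add hSpart hScpart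
    _ = 2 * c * (η * 2 ^ n) + c := by ring
    _ = (2:ℝ) ^ (1 - ε * (n:ℝ)) + (2:ℝ) ^ (-(n:ℝ)/2) := by rw [h2num, hcval]
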